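/- For every μ ∈ (0,1) and σ² > 0, the variance of the Simplex distribution is ∫₀¹ (y−μ)² f(y; μ, σ²) dy = μ(1−μ) − √(1/(2σ²)) · exp( 1/(2σ² μ²(1−μ)²) ) · Γ( 1/2, 1/(2σ² μ²(1−μ)²) ), where Γ(a, b) = ∫_b^∞ x^{a−1} e^{−x} dx is the upper incomplete gamma function. -/

import Mathlib

open MeasureTheory Real

/-- Unit deviance of the Simplex distribution. -/
noncomputable def simplexDev (y μ : ℝ) : ℝ :=
  (y - μ) ^ 2 / (y * (1 - y) * μ ^ 2 * (1 - μ) ^ 2)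

/-- Density of the Simplex distribution. -/
noncomputable def simplexPdf (μ σ2 y : ℝ) : ℝ :=
  (2 * π * σ2 * (y * (1 - y)) ^ 3) ^ (-(1/2 : ℝ)) * Real.exp (-simplexDev y μ / (2 * σ2))

/-- Upper incomplete gamma function Γ(a, b) = ∫_b^∞ x^{a-1} e^{-x} dx. -/
noncomputable def upperGamma (a b : ℝ) : ℝ :=
  ∫ x in Set.Ioi b, x ^ (a - 1) * Real.exp (-x)

open Set


noncomputable def svU (s : ℝ) : ℝ := (s^2 + s * Real.sqrt (s^2+4))/2

lemma sqrtR_pos (s : ℝ) : 0 < Real.sqrt (s^2+4) := Real.sqrt_pos.2 (by positivity)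

lemma sqrtR_sq (s : ℝ) : Real.sqrt (s^2+4) ^ 2 = s^2+4 := Real.sq_sqrt (by positivity)

lemma neg_lt_sqrtR (s : ℝ) : -s < Real.sqrt (s^2+4) := by
  nlinarith [Real.sqrt_nonneg (s^2+4), sqrtR_sq s, sqrtR_pos s]

lemma lt_sqrtR (s : ℝ) : s < Real.sqrt (s^2+4) := by
  nlinarith [Real.sqrt_nonneg (s^2+4), sqrtR_sq s, sqrtR_pos s]

lemma svU_quad (s : ℝ) : (svU s)^2 = s^2 * svU s + s^2 := by
  unfold svU; field_simp; linear_combination s^2 * sqrtR_sq s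

lemma svU_add_one_pos (s : ℝ) : 0 < svU s + 1 := by
  have h : svU s + 1 = (s + Real.sqrt (s^2+4))^2 / 4 := by
    unfold svU; field_simp; linear_combination (-2:ℝ) * sqrtR_sq s
  rw [h]
  exact div_pos (pow_pos (by linarith [neg_lt_sqrtR s]) 2) (by norm_num)

lemma svU_add_two_pos (s : ℝ) : 0 < svU s + 2 := by linarith [svU_add_one_pos s]

lemma svU_neg (s : ℝ) : svU (-s) = (s^2 - s * Real.sqrt (s^2+4))/2 := by
  unfold svU; rw [neg_sq]; ring

lemma svU_add (s : ℝ) : svU s + svU (-s) = s^2 := by rw [svU_neg]; unfold svU; ring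

lemma svU_mul (s : ℝ) : svU s * svU (-s) = -s^2 := by
  rw [svU_neg]; unfold svU
  field_simp
  linear_combination (-s^2) * sqrtR_sq s

noncomputable def svF (μ s : ℝ) : ℝ := s^2*(svU s+1)/((1+μ*svU s)*(svU s+2))

noncomputable def svG (μ σ2 s : ℝ) : ℝ :=
  (2*(μ*(1-μ))*Real.sqrt (μ*(1-μ)) / Real.sqrt (2*π*σ2)) * svF μ s
    * Real.exp (-(1/(2*σ2*(μ*(1-μ)))) * s^2)

lemma one_add_mul_svU_pos {μ : ℝ} (hμ : μ ∈ Set.Ioo (0:ℝ) 1) (s : ℝ) : 0 < 1 + μ * svU s := by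
  have h := svU_add_one_pos s
  nlinarith [hμ.1, hμ.2]

lemma svF_sum {μ : ℝ} (hμ : μ ∈ Set.Ioo (0:ℝ) 1) (s : ℝ) :
    svF μ s + svF μ (-s) = s^2/(1+μ*(1-μ)*s^2) := by
  have hu := svU_quad s
  have hu' : svU (-s) = s^2 - svU s := by linarith [svU_add s]
  have d1 := one_add_mul_svU_pos hμ s
  have d2 := svU_add_two_pos s
  have d3 := one_add_mul_svU_pos hμ (-s)
  have d4 := svU_add_two_pos (-s)
  have d5 : 0 < 1 + μ*(1-μ)*s^2 := by nlinarith [mul_nonneg (mul_nonneg hμ.1.le (by linarith [hμ.2] : (0:ℝ) ≤ 1-μ)) (sq_nonneg s)]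
  rw [hu'] at d3 d4
  unfold svF
  rw [hu']
  have e1 : 1 + svU s * μ ≠ 0 := by nlinarith
  have e5 : 1 + s ^ 2 * μ * (1 - μ) ≠ 0 := by nlinarith
  field_simp
  linear_combination (-s^2 - 2*s^2*μ + 4*s^2*μ^2 - 2*s^4*μ + s^4*μ^2 + 2*s^4*μ^3 - s^6*μ^2 + s^6*μ^3 + s^4*μ^2*(svU s) - s^2*μ^2*(svU s)^2) * hu


noncomputable def svPhi (μ y : ℝ) : ℝ := (y - μ) / Real.sqrt (μ*(1-μ)*(y*(1-y)))
noncomputable def svPhi' (μ y : ℝ) : ℝ :=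
  (y + μ - 2*μ*y) / (2*(y*(1-y))*Real.sqrt (μ*(1-μ)*(y*(1-y))))

lemma svU_comp {a b : ℝ} (ha : 0 < a) (hb : 0 < b) :
    svU ((a-b)/Real.sqrt (a*b)) = (a-b)/b := by
  set c := Real.sqrt (a*b) with hcdef
  have hc0 : 0 < c := Real.sqrt_pos.2 (by positivity)
  have hc : c^2 = a*b := Real.sq_sqrt (by positivity)
  have hsq : ((a-b)/c)^2 + 4 = ((a+b)/c)^2 := by
    field_simp
    linear_combination 4*hc
  unfold svU
  rw [hsq, Real.sqrt_sq (by positivity)]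
  field_simp
  linear_combination (2*b-2*a)*hc

lemma svPhi_hasDerivAt {μ y : ℝ} (hμ : μ ∈ Set.Ioo (0:ℝ) 1) (hy : y ∈ Set.Ioo (0:ℝ) 1) :
    HasDerivAt (svPhi μ) (svPhi' μ y) y := by
  obtain ⟨hy0, hy1⟩ := hy
  obtain ⟨hμ0, hμ1⟩ := hμ
  have hw : 0 < μ*(1-μ)*(y*(1-y)) := by
    have : 0 < 1-μ := by linarith
    have : 0 < 1-y := by linarith
    positivity
  have hc0 : 0 < Real.sqrt (μ*(1-μ)*(y*(1-y))) := Real.sqrt_pos.2 hw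
  have hin : HasDerivAt (fun z => μ*(1-μ)*(z*(1-z))) (μ*(1-μ)*(1-2*y)) y := by
    have : HasDerivAt (fun z : ℝ => μ*(1-μ)*(z*(1-z))) (μ*(1-μ)*(1*(1-y) + y*(0-1))) y :=
      (((hasDerivAt_id y).mul ((hasDerivAt_const y 1).sub (hasDerivAt_id y)))).const_mul _
    convert this using 1; ring
  have hs : HasDerivAt (fun z => Real.sqrt (μ*(1-μ)*(z*(1-z))))
      (μ*(1-μ)*(1-2*y) / (2 * Real.sqrt (μ*(1-μ)*(y*(1-y))))) y := hin.sqrt hw.ne'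
  have hnum : HasDerivAt (fun z : ℝ => z - μ) 1 y := (hasDerivAt_id y).sub_const μ
  have hdiv : HasDerivAt (fun z : ℝ => (z - μ) / Real.sqrt (μ*(1-μ)*(z*(1-z)))) _ y :=
    hnum.div hs hc0.ne'
  convert hdiv using 1
  · rfl
  unfold svPhi'
  have hc : (Real.sqrt (μ*(1-μ)*(y*(1-y))))^2 = μ*(1-μ)*(y*(1-y)) := Real.sq_sqrt hw.le
  set c := Real.sqrt (μ*(1-μ)*(y*(1-y)))
  have h1y : (1:ℝ) - y ≠ 0 := by linarith
  field_simp [hy0.ne', h1y, hc0.ne']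
  linear_combination (μ - 2*y*μ - y + 2*y^2) * hc

lemma svPhi'_pos {μ y : ℝ} (hμ : μ ∈ Set.Ioo (0:ℝ) 1) (hy : y ∈ Set.Ioo (0:ℝ) 1) :
    0 < svPhi' μ y := by
  obtain ⟨hy0, hy1⟩ := hy; obtain ⟨hμ0, hμ1⟩ := hμ
  have h1y : (0:ℝ) < 1 - y := by linarith
  have h1μ : (0:ℝ) < 1 - μ := by linarith
  have hw : 0 < μ*(1-μ)*(y*(1-y)) := by positivity
  have hc0 : 0 < Real.sqrt (μ*(1-μ)*(y*(1-y))) := Real.sqrt_pos.2 hw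
  have hnum : 0 < y + μ - 2*μ*y := by nlinarith
  unfold svPhi'
  positivity

lemma svPhi_injOn {μ : ℝ} (hμ : μ ∈ Set.Ioo (0:ℝ) 1) : Set.InjOn (svPhi μ) (Set.Ioo 0 1) := by
  have : StrictMonoOn (svPhi μ) (Set.Ioo 0 1) := by
    apply strictMonoOn_of_hasDerivWithinAt_pos (convex_Ioo 0 1)
    · exact fun y hy => ((svPhi_hasDerivAt hμ hy).continuousAt).continuousWithinAt
    · intro y hy
      rw [interior_Ioo] at hy
      exact ((svPhi_hasDerivAt hμ hy).hasDerivWithinAt)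
    · intro y hy
      rw [interior_Ioo] at hy
      exact svPhi'_pos hμ hy
  exact this.injOn

lemma svPhi_image {μ : ℝ} (hμ : μ ∈ Set.Ioo (0:ℝ) 1) :
    svPhi μ '' (Set.Ioo 0 1) = Set.univ := by
  obtain ⟨hμ0, hμ1⟩ := hμ
  have h1μ : (0:ℝ) < 1 - μ := by linarith
  apply Set.eq_univ_of_forall
  intro s
  have hR0 : 0 < Real.sqrt (s^2+4) := Real.sqrt_pos.2 (by positivity)
  set t := (s + Real.sqrt (s^2+4))/2 with htdef
  have hRs : -s < Real.sqrt (s^2+4) := by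
    nlinarith [Real.sqrt_nonneg (s^2+4), Real.sq_sqrt (show (0:ℝ) ≤ s^2+4 by positivity)]
  have ht0 : 0 < t := by rw [htdef]; linarith
  have ht2 : t^2 = s*t + 1 := by
    rw [htdef]; field_simp
    linear_combination Real.sq_sqrt (show (0:ℝ) ≤ s^2+4 by positivity)
  have hD : 0 < 1 - μ + μ*t^2 := by positivity
  set y := μ*t^2/(1-μ+μ*t^2) with hydef
  have hy0 : 0 < y := by positivity
  have hy1 : y < 1 := by
    rw [hydef, div_lt_one hD]; nlinarith
  refine ⟨y, ⟨hy0, hy1⟩, ?_⟩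
  have h1y : 1 - y = (1-μ)/(1-μ+μ*t^2) := by rw [hydef]; field_simp; ring
  have hBig : μ*(1-μ)*(y*(1-y)) = (μ*(1-μ)*t/(1-μ+μ*t^2))^2 := by
    rw [hydef, h1y]; field_simp
  unfold svPhi
  rw [hBig, Real.sqrt_sq (by positivity)]
  rw [hydef]
  rw [div_eq_iff (by positivity)]
  field_simp
  linear_combination ((μ-μ^2)/4 + (1-μ)^2/4) * Real.sq_sqrt (show (0:ℝ) ≤ s^2+4 by positivity)

lemma sv_pointwise {μ σ2 y : ℝ} (hμ : μ ∈ Set.Ioo (0:ℝ) 1) (hσ : 0 < σ2)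
    (hy : y ∈ Set.Ioo (0:ℝ) 1) :
    (y - μ)^2 * simplexPdf μ σ2 y = svPhi' μ y * svG μ σ2 (svPhi μ y) := by
  obtain ⟨hy0, hy1⟩ := hy; obtain ⟨hμ0, hμ1⟩ := hμ
  have h1y : (0:ℝ) < 1 - y := by linarith
  have h1μ : (0:ℝ) < 1 - μ := by linarith
  have hm : (0:ℝ) < μ*(1-μ) := by positivity
  have hw : (0:ℝ) < y*(1-y) := by positivity
  have h2pi : (0:ℝ) < 2*π*σ2 := by positivity
  -- rewrite the rpow
  have hPdf : (2 * π * σ2 * (y * (1 - y)) ^ 3) ^ (-(1/2 : ℝ))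
      = 1/(Real.sqrt (2*π*σ2) * ((y*(1-y)) * Real.sqrt (y*(1-y)))) := by
    rw [Real.rpow_neg (by positivity), ← Real.sqrt_eq_rpow, Real.sqrt_mul h2pi.le,
      show (y*(1-y))^3 = (y*(1-y))^2 * (y*(1-y)) by ring,
      Real.sqrt_mul (sq_nonneg _), Real.sqrt_sq hw.le, one_div]
  -- exponent identity
  have hc2 : (Real.sqrt (μ*(1-μ)*(y*(1-y))))^2 = μ*(1-μ)*(y*(1-y)) :=
    Real.sq_sqrt (by positivity)
  have hs2 : (svPhi μ y)^2 = (y-μ)^2 / (μ*(1-μ)*(y*(1-y))) := by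
    unfold svPhi; rw [div_pow, hc2]
  have hExp : -simplexDev y μ/(2*σ2) = -(1/(2*σ2*(μ*(1-μ)))) * (svPhi μ y)^2 := by
    rw [hs2]; unfold simplexDev; field_simp
  have hU : svU (svPhi μ y) = (y-μ)/(μ*(1-y)) := by
    unfold svPhi
    rw [show μ*(1-μ)*(y*(1-y)) = (y*(1-μ))*(μ*(1-y)) by ring,
      show y - μ = y*(1-μ) - μ*(1-y) by ring,
      svU_comp (by positivity) (by positivity),
      show y*(1-μ) - μ*(1-y) = y - μ by ring]
  -- denominators in svF
  have hd1 : 1 + μ * ((y-μ)/(μ*(1-y))) = (1-μ)/(1-y) := by field_simp; ring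
  have hd2 : (y-μ)/(μ*(1-y)) + 1 = y*(1-μ)/(μ*(1-y)) := by field_simp; ring
  have hd3 : (y-μ)/(μ*(1-y)) + 2 = (y + μ - 2*μ*y)/(μ*(1-y)) := by field_simp; ring
  have hF : svF μ (svPhi μ y)
      = ((y-μ)^2 / (μ*(1-μ)*(y*(1-y)))) * (y*(1-y)) / (y + μ - 2*μ*y) := by
    unfold svF
    rw [hU, hs2, hd1, hd2, hd3]
    have hnum : (0:ℝ) < y + μ - 2*μ*y := by nlinarith
    field_simp
  unfold simplexPdf svPhi' svG
  rw [hPdf, hExp, hF, Real.sqrt_mul hm.le]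
  have hp2 : (Real.sqrt (μ*(1-μ)))^2 = μ*(1-μ) := Real.sq_sqrt hm.le
  have hq2 : (Real.sqrt (y*(1-y)))^2 = y*(1-y) := Real.sq_sqrt hw.le
  have hp0 : 0 < Real.sqrt (μ*(1-μ)) := Real.sqrt_pos.2 hm
  have hq0 : 0 < Real.sqrt (y*(1-y)) := Real.sqrt_pos.2 hw
  have hr0 : 0 < Real.sqrt (2*π*σ2) := Real.sqrt_pos.2 h2pi
  have hnum : (0:ℝ) < y + μ - 2*μ*y := by nlinarith
  set p := Real.sqrt (μ*(1-μ))
  set q := Real.sqrt (y*(1-y))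
  set r := Real.sqrt (2*π*σ2)
  set E := Real.exp (-(1/(2*σ2*(μ*(1-μ)))) * (svPhi μ y)^2)
  have e6 : y + μ - y * μ * 2 ≠ 0 := by nlinarith
  field_simp


lemma sv_exp_inv {c : ℝ} (hc : 0 < c) :
    ∫ v in Ioi (0:ℝ), Real.exp (-(c*v)) = 1/c := by
  have := integral_comp_mul_left_Ioi (fun x => Real.exp (-x)) 0 hc
  simp only [mul_zero, integral_exp_neg_Ioi, smul_eq_mul] at this
  rw [this, neg_zero, Real.exp_zero, mul_one, one_div]

lemma sv_translate {A : ℝ} :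
    ∫ x in Ioi A, x ^ ((1:ℝ)/2-1) * Real.exp (-x)
      = Real.exp (-A) * ∫ v in Ioi (0:ℝ), Real.exp (-v) * (v+A) ^ (-(1/2):ℝ) := by
  have himg : (fun v : ℝ => v + A) '' Ioi 0 = Ioi A := by
    rw [image_add_const_Ioi, zero_add]
  have key := integral_image_eq_integral_abs_deriv_smul (f := fun v : ℝ => v + A)
    (f' := fun _ => (1:ℝ)) measurableSet_Ioi (s := Ioi 0)
    (fun v _ => (HasDerivAt.hasDerivWithinAt (by simpa using (hasDerivAt_id v).add_const A)))
    (fun a _ b _ h => by simpa using h)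
    (fun x => x ^ ((1:ℝ)/2-1) * Real.exp (-x))
  rw [himg] at key
  rw [key, ← integral_const_mul]
  apply setIntegral_congr_fun measurableSet_Ioi
  intro v _
  simp only [smul_eq_mul, abs_one, one_mul]
  rw [show (v+A) ^ ((1:ℝ)/2-1) = (v+A) ^ (-(1/2):ℝ) by norm_num,
    show Real.exp (-(v+A)) = Real.exp (-A) * Real.exp (-v) by rw [← Real.exp_add]; ring_nf]
  ring

lemma sv_J2 {b m : ℝ} (hb : 0 < b) (hm : 0 < m) :
    ∫ s in Ioi (0:ℝ), Real.exp (-b*s^2) / (1+m*s^2)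
      = Real.sqrt π/(2*Real.sqrt m) * Real.exp (b/m)
        * ∫ x in Ioi (b/m), x ^ ((1:ℝ)/2-1) * Real.exp (-x) := by
  have hA : 0 < b/m := by positivity
  -- write as double integral
  have step2 : ∫ s in Ioi (0:ℝ), Real.exp (-b*s^2) / (1+m*s^2)
      = ∫ s in Ioi (0:ℝ), ∫ v in Ioi (0:ℝ),
          Real.exp (-b*s^2) * Real.exp (-((1+m*s^2)*v)) := by
    apply setIntegral_congr_fun measurableSet_Ioi
    intro s _
    have hc : 0 < 1+m*s^2 := by positivity
    show Real.exp (-b*s^2) / (1+m*s^2)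
      = ∫ v in Ioi (0:ℝ), Real.exp (-b*s^2) * Real.exp (-((1+m*s^2)*v))
    rw [integral_const_mul, sv_exp_inv hc, div_eq_mul_one_div]
  -- integrability on the product
  have hmeas : Continuous (fun p : ℝ×ℝ =>
      Real.exp (-b*p.1^2) * Real.exp (-((1+m*p.1^2)*p.2))) := by fun_prop
  have hT : Integrable (Function.uncurry fun s v =>
      Real.exp (-b*s^2) * Real.exp (-((1+m*s^2)*v)))
      ((volume.restrict (Ioi 0)).prod (volume.restrict (Ioi 0))) := by
    have hbound : Integrable (fun p : ℝ×ℝ => Real.exp (-b*p.1^2) * Real.exp (-p.2))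
        ((volume.restrict (Ioi 0)).prod (volume.restrict (Ioi 0))) := by
      exact Integrable.mul_prod (f := fun s : ℝ => Real.exp (-b*s^2))
        (g := fun v : ℝ => Real.exp (-v))
        ((integrable_exp_neg_mul_sq hb).integrableOn)
        (by simpa [IntegrableOn] using exp_neg_integrableOn_Ioi 0 (by norm_num : (0:ℝ) < 1))
    apply hbound.mono' hmeas.aestronglyMeasurable
    rw [Measure.prod_restrict]
    filter_upwards [ae_restrict_mem (measurableSet_Ioi.prod measurableSet_Ioi)] with p hp
    have hv : 0 < p.2 := hp.2
    rw [Real.norm_eq_abs, abs_of_nonneg (by positivity)]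
    apply mul_le_mul_of_nonneg_left _ (Real.exp_pos _).le
    apply Real.exp_le_exp.2
    nlinarith [mul_nonneg (mul_nonneg hm.le (sq_nonneg p.1)) hv.le]
  rw [step2, integral_integral_swap hT]
  -- inner gaussian integral
  have step5 : ∫ v in Ioi (0:ℝ), ∫ s in Ioi (0:ℝ),
        Real.exp (-b*s^2) * Real.exp (-((1+m*s^2)*v))
      = ∫ v in Ioi (0:ℝ), Real.exp (-v) * (Real.sqrt (π/(b+m*v))/2) := by
    apply setIntegral_congr_fun measurableSet_Ioi
    intro v _
    have : ∀ s : ℝ, Real.exp (-b*s^2) * Real.exp (-((1+m*s^2)*v))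
        = Real.exp (-v) * Real.exp (-(b+m*v)*s^2) := by
      intro s; rw [← Real.exp_add, ← Real.exp_add]; ring_nf
    simp_rw [this]
    rw [integral_const_mul, integral_gaussian_Ioi]
  rw [step5]
  -- rewrite sqrt and pull constants
  have step6 : ∫ v in Ioi (0:ℝ), Real.exp (-v) * (Real.sqrt (π/(b+m*v))/2)
      = Real.sqrt π/(2*Real.sqrt m)
        * ∫ v in Ioi (0:ℝ), Real.exp (-v) * (v+b/m) ^ (-(1/2):ℝ) := by
    rw [← integral_const_mul]
    apply setIntegral_congr_fun measurableSet_Ioi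
    intro v hv
    have hv0 : (0:ℝ) < v := hv
    have hbm : 0 < b + m*v := by positivity
    have hvA : 0 < v + b/m := by positivity
    show Real.exp (-v) * (Real.sqrt (π/(b+m*v))/2)
      = Real.sqrt π/(2*Real.sqrt m) * (Real.exp (-v) * (v+b/m) ^ (-(1/2):ℝ))
    have h1 : Real.sqrt (π/(b+m*v)) = Real.sqrt π / Real.sqrt (b+m*v) :=
      Real.sqrt_div pi_pos.le _
    have h2 : Real.sqrt (b+m*v) = Real.sqrt m * Real.sqrt (v+b/m) := by
      rw [show b+m*v = m*(v+b/m) by field_simp; ring, Real.sqrt_mul hm.le]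
    have h3 : (v+b/m) ^ (-(1/2):ℝ) = (Real.sqrt (v+b/m))⁻¹ := by
      rw [Real.rpow_neg hvA.le, ← Real.sqrt_eq_rpow]
    have hsm : Real.sqrt m ≠ 0 := (Real.sqrt_pos.2 hm).ne'
    have hsvA : Real.sqrt (v+b/m) ≠ 0 := (Real.sqrt_pos.2 hvA).ne'
    rw [h1, h2, h3]
    field_simp
  rw [step6, sv_translate]
  have hE : Real.exp (b/m) * Real.exp (-(b/m)) = 1 := by
    rw [← Real.exp_add]; simp
  linear_combination (-(Real.sqrt π/(2*Real.sqrt m))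
    * (∫ v in Ioi (0:ℝ), Real.exp (-v) * (v+b/m) ^ (-(1/2):ℝ))) * hE

theorem simplex_variance (μ σ2 : ℝ) (hμ : μ ∈ Set.Ioo (0:ℝ) 1) (hσ : 0 < σ2) :
    ∫ y in Set.Ioo (0:ℝ) 1, (y - μ) ^ 2 * simplexPdf μ σ2 y
      = μ * (1 - μ) - Real.sqrt (1 / (2 * σ2))
          * Real.exp (1 / (2 * σ2 * μ ^ 2 * (1 - μ) ^ 2))
          * upperGamma (1/2) (1 / (2 * σ2 * μ ^ 2 * (1 - μ) ^ 2)) := by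
  obtain ⟨hμ0, hμ1⟩ := id hμ
  have h1μ : (0:ℝ) < 1 - μ := by linarith
  have hm : (0:ℝ) < μ*(1-μ) := by positivity
  have hβ : (0:ℝ) < 1/(2*σ2*(μ*(1-μ))) := by positivity
  have h2pi : (0:ℝ) < 2*π*σ2 := by positivity
  set m : ℝ := μ*(1-μ) with hmdef
  set β : ℝ := 1/(2*σ2*(μ*(1-μ))) with hβdef
  set K : ℝ := 2*(μ*(1-μ))*Real.sqrt (μ*(1-μ)) / Real.sqrt (2*π*σ2) with hKdef
  -- continuity and integrability of svG
  have hU_cont : Continuous svU := by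
    unfold svU; fun_prop
  have hF_cont : Continuous (svF μ) := by
    unfold svF
    refine Continuous.div (by fun_prop) (by fun_prop) ?_
    exact fun s => (mul_pos (one_add_mul_svU_pos hμ s) (svU_add_two_pos s)).ne'
  have hG_cont : Continuous (svG μ σ2) := by
    unfold svG; fun_prop
  have hrpow2 : ∀ x : ℝ, x ^ (2:ℝ) = x^2 := fun x => by
    rw [show (2:ℝ) = ((2:ℕ):ℝ) by norm_num, Real.rpow_natCast]
  have hIntBound : Integrable (fun s : ℝ => (K/(1-μ)) * (s^2 * Real.exp (-β*s^2))) := by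
    apply Integrable.const_mul
    have := integrable_rpow_mul_exp_neg_mul_sq hβ (show (-1:ℝ) < 2 by norm_num)
    simpa only [hrpow2] using this
  have hK0 : 0 ≤ K := by positivity
  have hFb : ∀ s : ℝ, svF μ s ≤ s^2/(1-μ) := by
    intro s
    have h1 := one_add_mul_svU_pos hμ s
    have h2 := svU_add_two_pos s
    have h3 := svU_add_one_pos s
    unfold svF
    rw [div_le_div_iff₀ (by positivity) h1μ]
    nlinarith [mul_nonneg (sq_nonneg s) h1μ.le,
      mul_nonneg (mul_nonneg hμ0.le (sq_nonneg s)) (mul_pos h3 h2).le]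
  have hF0 : ∀ s : ℝ, 0 ≤ svF μ s := by
    intro s
    have h1 := one_add_mul_svU_pos hμ s
    have h2 := svU_add_two_pos s
    have h3 := svU_add_one_pos s
    unfold svF
    positivity
  have hIntG : Integrable (svG μ σ2) := by
    apply hIntBound.mono' hG_cont.aestronglyMeasurable
    apply Filter.Eventually.of_forall
    intro s
    have h1 := hFb s
    have h2 := hF0 s
    have hE : 0 < Real.exp (-(1/(2*σ2*(μ*(1-μ)))) * s^2) := Real.exp_pos _
    rw [Real.norm_eq_abs]
    unfold svG
    rw [abs_of_nonneg (by positivity)]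
    have : -(1/(2*σ2*(μ*(1-μ)))) * s^2 = -β*s^2 := by rw [hβdef]
    rw [this]
    have hE' : (0:ℝ) ≤ Real.exp (-β*s^2) := (Real.exp_pos _).le
    calc K * svF μ s * Real.exp (-β*s^2)
        ≤ K * (s^2/(1-μ)) * Real.exp (-β*s^2) := by
          apply mul_le_mul_of_nonneg_right _ hE'
          exact mul_le_mul_of_nonneg_left h1 hK0
      _ = K/(1-μ) * (s^2 * Real.exp (-β*s^2)) := by ring
  -- Step A : change of variables
  have hA1 : ∫ y in Set.Ioo (0:ℝ) 1, (y - μ) ^ 2 * simplexPdf μ σ2 y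
      = ∫ s, svG μ σ2 s := by
    rw [show (∫ y in Set.Ioo (0:ℝ) 1, (y - μ) ^ 2 * simplexPdf μ σ2 y)
        = ∫ y in Set.Ioo (0:ℝ) 1, |svPhi' μ y| • svG μ σ2 (svPhi μ y) from
      setIntegral_congr_fun measurableSet_Ioo (fun y hy => by
        rw [smul_eq_mul, abs_of_pos (svPhi'_pos hμ hy)]
        exact sv_pointwise hμ hσ hy)]
    rw [← integral_image_eq_integral_abs_deriv_smul measurableSet_Ioo
        (fun y hy => (svPhi_hasDerivAt hμ hy).hasDerivWithinAt) (svPhi_injOn hμ)]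
    rw [svPhi_image hμ, Measure.restrict_univ]
  -- Step B : symmetrization
  have hIntGneg : Integrable (fun s : ℝ => svG μ σ2 (-s)) := hIntG.comp_neg
  have hA2 : ∫ s, svG μ σ2 s = ∫ s in Ioi (0:ℝ), (svG μ σ2 s + svG μ σ2 (-s)) := by
    rw [integral_add hIntG.integrableOn hIntGneg.integrableOn]
    rw [integral_comp_neg_Ioi]
    rw [neg_zero, ← intervalIntegral.integral_Iic_add_Ioi hIntG.integrableOn hIntG.integrableOn]
    ring
  -- Step C : the symmetrized integrand
  have hA3 : ∫ s in Ioi (0:ℝ), (svG μ σ2 s + svG μ σ2 (-s))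
      = K * ∫ s in Ioi (0:ℝ), (s^2/(1+m*s^2)) * Real.exp (-β*s^2) := by
    rw [← integral_const_mul]
    apply setIntegral_congr_fun measurableSet_Ioi
    intro s _
    show svG μ σ2 s + svG μ σ2 (-s) = K * ((s^2/(1+m*s^2)) * Real.exp (-β*s^2))
    unfold svG
    rw [neg_sq]
    have hsum := svF_sum hμ s
    have hEeq : -(1/(2*σ2*(μ*(1-μ)))) * s^2 = -β*s^2 := by rw [hβdef]
    rw [hEeq, ← hKdef]
    calc K * svF μ s * Real.exp (-β*s^2) + K * svF μ (-s) * Real.exp (-β*s^2)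
        = K * ((svF μ s + svF μ (-s)) * Real.exp (-β*s^2)) := by ring
      _ = K * ((s^2/(1+m*s^2)) * Real.exp (-β*s^2)) := by rw [hsum]
  -- Step D : split the integral
  have hI1 : IntegrableOn (fun s : ℝ => Real.exp (-β*s^2)) (Ioi 0) :=
    (integrable_exp_neg_mul_sq hβ).integrableOn
  have hI2 : IntegrableOn (fun s : ℝ => Real.exp (-β*s^2)/(1+m*s^2)) (Ioi 0) := by
    apply hI1.mono' ?_ ?_
    · apply Continuous.aestronglyMeasurable
      apply Continuous.div (by fun_prop) (by fun_prop)
      intro s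
      have : (0:ℝ) < 1 + m*s^2 := by positivity
      exact this.ne'
    · apply Filter.Eventually.of_forall
      intro s
      have h1 : (0:ℝ) < 1 + m*s^2 := by positivity
      rw [Real.norm_eq_abs, abs_of_nonneg (by positivity)]
      rw [div_le_iff₀ h1]
      nlinarith [mul_nonneg ((Real.exp_pos (-β*s^2)).le) (mul_nonneg hm.le (sq_nonneg s))]
  have hA4 : ∫ s in Ioi (0:ℝ), (s^2/(1+m*s^2)) * Real.exp (-β*s^2)
      = (1/m) * ((∫ s in Ioi (0:ℝ), Real.exp (-β*s^2))
          - ∫ s in Ioi (0:ℝ), Real.exp (-β*s^2)/(1+m*s^2)) := by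
    rw [← integral_sub hI1 hI2, ← integral_const_mul]
    apply setIntegral_congr_fun measurableSet_Ioi
    intro s _
    show (s^2/(1+m*s^2)) * Real.exp (-β*s^2)
        = (1/m) * (Real.exp (-β*s^2) - Real.exp (-β*s^2)/(1+m*s^2))
    have h1 : (0:ℝ) < 1 + m*s^2 := by positivity
    field_simp
    ring
  -- assemble
  rw [hA1, hA2, hA3, hA4, integral_gaussian_Ioi, sv_J2 hβ hm]
  have harg : β/m = 1/(2*σ2*μ^2*(1-μ)^2) := by
    rw [hβdef, hmdef]; field_simp
  have hGam : upperGamma (1/2) (1/(2*σ2*μ^2*(1-μ)^2))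
      = ∫ x in Ioi (β/m), x ^ ((1:ℝ)/2-1) * Real.exp (-x) := by
    rw [harg]; rfl
  rw [hGam, ← harg]
  -- scalar arithmetic
  have hsm2 : Real.sqrt m ^ 2 = m := Real.sq_sqrt hm.le
  have hsm0 : (0:ℝ) < Real.sqrt m := Real.sqrt_pos.2 hm
  have hr0 : (0:ℝ) < Real.sqrt (2*π*σ2) := Real.sqrt_pos.2 h2pi
  have h1 : Real.sqrt (π/β) = Real.sqrt (2*π*σ2) * Real.sqrt m := by
    rw [show π/β = (2*π*σ2)*m by rw [hβdef, hmdef]; field_simp,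
      Real.sqrt_mul h2pi.le]
  have h2 : Real.sqrt (1/(2*σ2)) = Real.sqrt π / Real.sqrt (2*π*σ2) := by
    rw [show (1:ℝ)/(2*σ2) = π/(2*π*σ2) by
        rw [div_eq_div_iff (by positivity : (0:ℝ) < 2*σ2).ne' h2pi.ne']; ring,
      Real.sqrt_div pi_pos.le]
  rw [h1, h2, hKdef, ← hmdef]
  set X := Real.exp (β/m) * ∫ x in Ioi (β/m), x ^ ((1:ℝ)/2-1) * Real.exp (-x) with hX
  field_simp
  linear_combination (Real.sqrt (2*π*σ2)) * hsm2
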